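/- arXiv:2301.05502 — 2 statements merged into one kernel-verified Lean document; each statement's English description precedes it below -/
import Mathlib

section
/- For every n ≥ 0, d ≥ 1, every orthogonal matrix R ∈ O(n+1), and all real homogeneous polynomials p, q of degree d in n+1 variables, the Bombieri–Weyl inner product is invariant under the change of variables by R: ⟨p ∘ R, q ∘ R⟩_BW = ⟨p, q⟩_BW, where (p ∘ R)(x) = p(Rx). -/
open MvPolynomial
open Finset

/-- The Bombieri–Weyl inner product on real polynomials in `n+1` variables, for degree `d`:
`⟨p,q⟩_BW = Σ_{|α|=d} (α₀!⋯α_n!/d!)·p_α·q_α`. -/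
noncomputable def bwInner (n d : ℕ) (p q : MvPolynomial (Fin (n + 1)) ℝ) : ℝ :=
  ∑ α ∈ p.support ∪ q.support,
    ((∏ i, ((α i).factorial : ℝ)) / (d.factorial : ℝ)) * coeff α p * coeff α q

-- c coefficient
noncomputable def bwc (n d : ℕ) (α : Fin (n+1) →₀ ℕ) : ℝ :=
  (∏ i, ((α i).factorial : ℝ)) / (d.factorial : ℝ)

lemma bwc_pos (n d : ℕ) (α : Fin (n+1) →₀ ℕ) : 0 < bwc n d α := by
  apply div_pos
  · exact Finset.prod_pos fun i _ => by positivity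
  · positivity

lemma bwInner_eq_sum (n d : ℕ) (p q : MvPolynomial (Fin (n+1)) ℝ) (s : Finset (Fin (n+1) →₀ ℕ))
    (hs : p.support ∪ q.support ⊆ s) :
    bwInner n d p q = ∑ α ∈ s, bwc n d α * coeff α p * coeff α q := by
  refine Finset.sum_subset hs fun α _ hα => ?_
  rw [Finset.mem_union, not_or] at hα
  rw [MvPolynomial.notMem_support_iff.mp hα.1]
  ring

lemma bwInner_symm (n d : ℕ) (p q : MvPolynomial (Fin (n+1)) ℝ) :
    bwInner n d p q = bwInner n d q p := by
  rw [bwInner, bwInner, Finset.union_comm]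
  exact Finset.sum_congr rfl fun α _ => by ring

lemma degree_eq_of_mem_support (n d : ℕ) {p : MvPolynomial (Fin (n+1)) ℝ}
    (hp : p.IsHomogeneous d) {α : Fin (n+1) →₀ ℕ} (hα : α ∈ p.support) :
    ∑ i, α i = d := by
  have h1 : α.degree = d := by rw [Finsupp.degree_eq_weight_one]; exact hp (MvPolynomial.mem_support_iff.mp hα)
  rw [← h1, Finsupp.degree]
  exact (Finset.sum_subset (Finset.subset_univ _)
    (fun i _ hi => Finsupp.notMem_support_iff.mp hi)).symm

/-- the d-th power of the linear form with coefficients y -/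
noncomputable def bwPhi (n d : ℕ) (y : Fin (n+1) → ℝ) : MvPolynomial (Fin (n+1)) ℝ :=
  (∑ i, C (y i) * X i) ^ d

lemma bwPhi_isHomogeneous (n d : ℕ) (y : Fin (n+1) → ℝ) :
    (bwPhi n d y).IsHomogeneous d := by
  have h1 : (∑ i, C (y i) * X i : MvPolynomial (Fin (n+1)) ℝ).IsHomogeneous 1 := by
    apply MvPolynomial.IsHomogeneous.sum
    intro i _
    exact (MvPolynomial.isHomogeneous_X _ _).C_mul _
  simpa [bwPhi] using h1.pow d

lemma coeff_bwPhi (n d : ℕ) (y : Fin (n+1) → ℝ) (α : Fin (n+1) →₀ ℕ) (hα : ∑ i, α i = d) :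
    coeff α (bwPhi n d y) = (Nat.multinomial univ ⇑α : ℝ) * ∏ i, y i ^ α i := by
  rw [bwPhi]
  rw [Finset.sum_pow_eq_sum_piAntidiag, MvPolynomial.coeff_sum]
  have key : ∀ k ∈ piAntidiag (univ : Finset (Fin (n+1))) d,
      coeff α ((Nat.multinomial univ k : MvPolynomial (Fin (n+1)) ℝ)
          * ∏ i, (C (y i) * X i) ^ (k i))
        = if k = ⇑α then (Nat.multinomial univ ⇑α : ℝ) * ∏ i, y i ^ α i else 0 := by
    intro k _
    obtain ⟨β, rfl⟩ : ∃ β : Fin (n+1) →₀ ℕ, ⇑β = k := ⟨Finsupp.equivFunOnFinite.symm k, rfl⟩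
    have hprod : (∏ i, (C (y i) * X i) ^ (β i) : MvPolynomial (Fin (n+1)) ℝ)
        = C (∏ i, y i ^ β i) * monomial β 1 := by
      rw [← MvPolynomial.prod_X_pow_eq_monomial]
      simp_rw [mul_pow, Finset.prod_mul_distrib, map_prod, map_pow]
      congr 1
      exact (Finset.prod_subset (Finset.subset_univ β.support)
        (fun i _ hi => by rw [Finsupp.notMem_support_iff.mp hi, pow_zero])).symm
    rw [hprod, ← MvPolynomial.C_eq_coe_nat, ← mul_assoc, ← map_mul, coeff_C_mul,
      MvPolynomial.coeff_monomial]
    have hiff : (⇑β = ⇑α) ↔ (β = α) := ⟨fun h => Finsupp.ext (fun i => congrFun h i),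
      fun h => by rw [h]⟩
    by_cases h : β = α
    · subst h; rw [if_pos rfl, if_pos rfl]; ring
    · rw [if_neg h, if_neg (fun hc => h (hiff.mp hc))]; ring
  rw [Finset.sum_congr rfl key, Finset.sum_ite_eq' (piAntidiag univ d) ⇑α]
  rw [if_pos (by rw [mem_piAntidiag]; exact ⟨hα, fun i _ => Finset.mem_univ i⟩)]


lemma bw_repro (n d : ℕ) (p : MvPolynomial (Fin (n+1)) ℝ) (hp : p.IsHomogeneous d)
    (y : Fin (n+1) → ℝ) :
    bwInner n d p (bwPhi n d y) = eval y p := by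
  have h1 : bwInner n d p (bwPhi n d y)
      = ∑ α ∈ p.support, bwc n d α * coeff α p * coeff α (bwPhi n d y) := by
    rw [bwInner]
    refine (Finset.sum_subset Finset.subset_union_left fun α _ hα => ?_).symm
    rw [MvPolynomial.notMem_support_iff.mp hα]
    ring
  rw [h1, MvPolynomial.eval_eq' y p]
  refine Finset.sum_congr rfl fun α hα => ?_
  have hdeg := degree_eq_of_mem_support n d hp hα
  rw [coeff_bwPhi n d y α hdeg]
  have hspec : ((∏ i, ((α i).factorial : ℕ)) * Nat.multinomial univ ⇑α : ℕ)
      = d.factorial := by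
    rw [Nat.multinomial_spec, hdeg]
  have hd0 : (d.factorial : ℝ) ≠ 0 := by positivity
  have : ((∏ i, ((α i).factorial : ℝ)) * (Nat.multinomial univ ⇑α : ℝ)) = (d.factorial : ℝ) := by
    push_cast [← hspec]
    ring
  rw [bwc]
  field_simp
  rw [← this]; ring

/-- all exponents of total degree d -/
noncomputable def bwA (n d : ℕ) : Finset (Fin (n+1) →₀ ℕ) :=
  Finset.finsuppAntidiag Finset.univ d

lemma support_subset_bwA (n d : ℕ) {p : MvPolynomial (Fin (n+1)) ℝ}
    (hp : p.IsHomogeneous d) : p.support ⊆ bwA n d := by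
  intro α hα
  rw [bwA, Finset.mem_finsuppAntidiag]
  exact ⟨degree_eq_of_mem_support n d hp hα, fun i _ => Finset.mem_univ i⟩

/-- the Bombieri–Weyl bilinear form as a bilinear map, via the fixed index set `bwA` -/
noncomputable def bwB (n d : ℕ) :
    MvPolynomial (Fin (n+1)) ℝ →ₗ[ℝ] MvPolynomial (Fin (n+1)) ℝ →ₗ[ℝ] ℝ :=
  LinearMap.mk₂ ℝ (fun p q => ∑ α ∈ bwA n d, bwc n d α * coeff α p * coeff α q)
    (fun p p' q => by
      rw [← Finset.sum_add_distrib]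
      exact Finset.sum_congr rfl fun α _ => by rw [MvPolynomial.coeff_add]; ring)
    (fun c p q => by
      rw [Finset.smul_sum]
      exact Finset.sum_congr rfl fun α _ => by
        rw [MvPolynomial.coeff_smul]; simp [smul_eq_mul]; ring)
    (fun p q q' => by
      rw [← Finset.sum_add_distrib]
      exact Finset.sum_congr rfl fun α _ => by rw [MvPolynomial.coeff_add]; ring)
    (fun c p q => by
      rw [Finset.smul_sum]
      exact Finset.sum_congr rfl fun α _ => by
        rw [MvPolynomial.coeff_smul]; simp [smul_eq_mul]; ring)

lemma bwB_apply (n d : ℕ) (p q : MvPolynomial (Fin (n+1)) ℝ) :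
    bwB n d p q = ∑ α ∈ bwA n d, bwc n d α * coeff α p * coeff α q := rfl

lemma bwB_eq_bwInner (n d : ℕ) {p q : MvPolynomial (Fin (n+1)) ℝ}
    (hp : p.IsHomogeneous d) (hq : q.IsHomogeneous d) :
    bwB n d p q = bwInner n d p q := by
  rw [bwB_apply, bwInner_eq_sum n d p q (bwA n d)
    (Finset.union_subset (support_subset_bwA n d hp) (support_subset_bwA n d hq))]

lemma bwB_self_eq_zero (n d : ℕ) {p : MvPolynomial (Fin (n+1)) ℝ}
    (hp : p.IsHomogeneous d) (h : bwB n d p p = 0) : p = 0 := by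
  rw [bwB_apply] at h
  have hcoeff : ∀ α ∈ bwA n d, coeff α p = 0 := by
    have h0 : ∀ α ∈ bwA n d, bwc n d α * coeff α p * coeff α p = 0 := by
      rw [Finset.sum_eq_zero_iff_of_nonneg (fun α _ => by
        rw [mul_assoc]; exact mul_nonneg (bwc_pos n d α).le (mul_self_nonneg _))] at h
      exact h
    intro α hα
    have := h0 α hα
    rw [mul_assoc] at this
    rcases mul_eq_zero.mp this with h' | h'
    · exact absurd h' (bwc_pos n d α).ne'
    · exact mul_self_eq_zero.mp h'
  ext α
  rw [MvPolynomial.coeff_zero]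
  by_cases hα : α ∈ bwA n d
  · exact hcoeff α hα
  · exact MvPolynomial.notMem_support_iff.mp fun hs => hα (support_subset_bwA n d hp hs)

lemma bw_finiteDimensional (n d : ℕ) :
    FiniteDimensional ℝ (homogeneousSubmodule (Fin (n+1)) ℝ d) := by
  set S : Finset (MvPolynomial (Fin (n+1)) ℝ) :=
    (bwA n d).image (fun α => monomial α (1 : ℝ)) with hS
  have hle : homogeneousSubmodule (Fin (n+1)) ℝ d ≤ Submodule.span ℝ (S : Set _) := by
    intro p hp
    rw [← MvPolynomial.support_sum_monomial_coeff p]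
    refine Submodule.sum_mem _ fun α hα => ?_
    have : monomial α (coeff α p) = coeff α p • monomial α (1 : ℝ) := by
      rw [MvPolynomial.smul_monomial, smul_eq_mul, mul_one]
    rw [this]
    refine Submodule.smul_mem _ _ (Submodule.subset_span ?_)
    rw [hS]
    exact Finset.mem_coe.mpr (Finset.mem_image_of_mem _
      (support_subset_bwA n d ((mem_homogeneousSubmodule _ _).mp hp) hα))
  exact Submodule.finiteDimensional_of_le hle

lemma bw_span (n d : ℕ) (q : MvPolynomial (Fin (n+1)) ℝ) (hq : q.IsHomogeneous d) :
    q ∈ Submodule.span ℝ (Set.range (bwPhi n d)) := by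
  classical
  set V := homogeneousSubmodule (Fin (n+1)) ℝ d with hV
  haveI : FiniteDimensional ℝ V := bw_finiteDimensional n d
  set W : Submodule ℝ (MvPolynomial (Fin (n+1)) ℝ) :=
    Submodule.span ℝ (Set.range (bwPhi n d)) with hW
  by_contra hq'
  -- the restriction of W to V
  set W' : Submodule ℝ V := W.comap V.subtype with hW'
  have hqV : q ∈ V := (mem_homogeneousSubmodule _ _).mpr hq
  set qV : V := ⟨q, hqV⟩ with hqVdef
  have hmk : Submodule.Quotient.mk (p := W') qV ≠ 0 := by
    rw [Ne, Submodule.Quotient.mk_eq_zero]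
    exact fun h => hq' h
  obtain ⟨f0, hf0⟩ : ∃ f0 : Module.Dual ℝ (V ⧸ W'), f0 (Submodule.Quotient.mk qV) ≠ 0 := by
    by_contra hc
    push_neg at hc
    exact hmk ((Module.forall_dual_apply_eq_zero_iff ℝ _).mp hc)
  set f : Module.Dual ℝ V := f0.comp W'.mkQ with hf
  -- the map induced by the bilinear form
  set T : V →ₗ[ℝ] Module.Dual ℝ V := ((bwB n d).comp V.subtype).compl₂ V.subtype with hT
  have hTinj : Function.Injective T := by
    rw [← LinearMap.ker_eq_bot, Submodule.eq_bot_iff]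
    intro r hr
    rw [LinearMap.mem_ker] at hr
    have : bwB n d r.val r.val = 0 := by
      have := congrFun (congrArg DFunLike.coe hr) r
      simpa [hT] using this
    have hr0 : (r : MvPolynomial (Fin (n+1)) ℝ) = 0 :=
      bwB_self_eq_zero n d ((mem_homogeneousSubmodule _ _).mp r.2) this
    exact Subtype.ext hr0
  have hTsurj : Function.Surjective T :=
    (LinearMap.injective_iff_surjective_of_finrank_eq_finrank
      (Subspace.dual_finrank_eq).symm).mp hTinj
  obtain ⟨r, hr⟩ := hTsurj f
  have hrval : (r : MvPolynomial (Fin (n+1)) ℝ) = 0 := by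
    have heval : ∀ y : Fin (n+1) → ℝ, eval y (r : MvPolynomial (Fin (n+1)) ℝ) = 0 := by
      intro y
      have hphiV : bwPhi n d y ∈ V := (mem_homogeneousSubmodule _ _).mpr
        (bwPhi_isHomogeneous n d y)
      have hphiW' : (⟨bwPhi n d y, hphiV⟩ : V) ∈ W' :=
        Submodule.mem_comap.mpr (Submodule.subset_span ⟨y, rfl⟩)
      have h1 : T r ⟨bwPhi n d y, hphiV⟩ = f ⟨bwPhi n d y, hphiV⟩ := by rw [hr]
      have h2 : f ⟨bwPhi n d y, hphiV⟩ = 0 := by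
        rw [hf, LinearMap.comp_apply, Submodule.mkQ_apply,
          (Submodule.Quotient.mk_eq_zero _).mpr hphiW', map_zero]
      have h3 : T r ⟨bwPhi n d y, hphiV⟩ = bwB n d r.val (bwPhi n d y) := rfl
      rw [h3, h2] at h1
      rw [← bw_repro n d r.val ((mem_homogeneousSubmodule _ _).mp r.2) y,
        ← bwB_eq_bwInner n d ((mem_homogeneousSubmodule _ _).mp r.2)
          (bwPhi_isHomogeneous n d y)]
      exact h1
    have := MvPolynomial.funext (p := (r : MvPolynomial (Fin (n+1)) ℝ)) (q := 0)
      (fun x => by rw [heval x, map_zero])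
    exact this
  have hr0 : r = 0 := Subtype.ext hrval
  rw [hr0, map_zero] at hr
  have : f qV = 0 := by rw [← hr]; rfl
  rw [hf, LinearMap.comp_apply, Submodule.mkQ_apply] at this
  exact hf0 this

lemma bw_eval_aeval (n : ℕ) (R : Matrix (Fin (n+1)) (Fin (n+1)) ℝ)
    (z : Fin (n+1) → ℝ) (p : MvPolynomial (Fin (n+1)) ℝ) :
    eval z (aeval (fun i => ∑ j, C (R i j) * X j) p)
      = eval (fun i => ∑ j, R i j * z j) p := by
  rw [MvPolynomial.aeval_def, MvPolynomial.eval₂_comp_left (MvPolynomial.eval z)]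
  have h1 : (MvPolynomial.eval z).comp (algebraMap ℝ (MvPolynomial (Fin (n+1)) ℝ))
      = RingHom.id ℝ := by ext a; simp
  rw [h1]
  rw [show ((MvPolynomial.eval z) ∘ fun i => ∑ j, C (R i j) * X j)
      = fun i => ∑ j, R i j * z j from funext fun i => by simp]
  rfl

lemma bw_aeval_bwPhi (n d : ℕ) (R : Matrix (Fin (n+1)) (Fin (n+1)) ℝ) (y : Fin (n+1) → ℝ) :
    aeval (fun i => ∑ j, C (R i j) * X j) (bwPhi n d y)
      = bwPhi n d (fun j => ∑ i, y i * R i j) := by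
  rw [bwPhi, bwPhi, map_pow]
  congr 1
  rw [map_sum]
  simp only [map_mul, aeval_C, aeval_X, MvPolynomial.algebraMap_eq]
  simp_rw [Finset.mul_sum]
  rw [Finset.sum_comm]
  refine Finset.sum_congr rfl fun j _ => ?_
  rw [map_sum, Finset.sum_mul]
  exact Finset.sum_congr rfl fun i _ => by rw [map_mul, mul_assoc]

lemma bw_orth_entry (n : ℕ) (R : Matrix (Fin (n+1)) (Fin (n+1)) ℝ)
    (hR : R ∈ Matrix.orthogonalGroup (Fin (n+1)) ℝ) (i k : Fin (n+1)) :
    ∑ j, R i j * R k j = if i = k then 1 else 0 := by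
  have h : R * star R = 1 := Matrix.mem_unitaryGroup_iff.mp hR
  have h1 : (R * star R) i k = (1 : Matrix (Fin (n+1)) (Fin (n+1)) ℝ) i k := by rw [h]
  rw [Matrix.mul_apply, Matrix.one_apply] at h1
  simpa using h1

/-- For every `n ≥ 0`, `d ≥ 1`, every orthogonal matrix `R ∈ O(n+1)` and all
real homogeneous polynomials `p, q` of degree `d` in `n+1` variables, the Bombieri–Weyl inner
product is invariant under the change of variables by `R`:
`⟨p ∘ R, q ∘ R⟩_BW = ⟨p, q⟩_BW`, where `(p ∘ R)(x) = p(Rx)`. -/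
theorem bwInner_invariant_orthogonal (n d : ℕ) (hd : 1 ≤ d)
    (R : Matrix (Fin (n + 1)) (Fin (n + 1)) ℝ)
    (hR : R ∈ Matrix.orthogonalGroup (Fin (n + 1)) ℝ)
    (p q : MvPolynomial (Fin (n + 1)) ℝ)
    (hp : p.IsHomogeneous d) (hq : q.IsHomogeneous d) :
    bwInner n d (aeval (fun i => ∑ j, C (R i j) * X j) p)
        (aeval (fun i => ∑ j, C (R i j) * X j) q)
      = bwInner n d p q := by
  classical
  have hlin : ∀ i, ((∑ j, C (R i j) * X j : MvPolynomial (Fin (n+1)) ℝ)).IsHomogeneous 1 :=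
    fun i => MvPolynomial.IsHomogeneous.sum _ _ _
      (fun j _ => (MvPolynomial.isHomogeneous_X _ _).C_mul _)
  have hσhom : ∀ {s : MvPolynomial (Fin (n+1)) ℝ}, s.IsHomogeneous d →
      (aeval (fun i => ∑ j, C (R i j) * X j) s).IsHomogeneous d := by
    intro s hs
    simpa using hs.aeval _ hlin
  set F : MvPolynomial (Fin (n+1)) ℝ →ₗ[ℝ] ℝ :=
    ((bwB n d (aeval (fun i => ∑ j, C (R i j) * X j) p)).comp
        (aeval (fun i => ∑ j, C (R i j) * X j)).toLinearMap) - (bwB n d p) with hF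
  have hFphi : ∀ y : Fin (n+1) → ℝ, F (bwPhi n d y) = 0 := by
    intro y
    have h1 := bw_aeval_bwPhi n d R y
    simp only [hF, LinearMap.sub_apply, LinearMap.comp_apply, AlgHom.toLinearMap_apply]
    rw [h1, bwB_eq_bwInner n d (hσhom hp) (bwPhi_isHomogeneous n d _),
      bw_repro n d _ (hσhom hp), bw_eval_aeval,
      bwB_eq_bwInner n d hp (bwPhi_isHomogeneous n d _), bw_repro n d p hp]
    have hy : (fun i => ∑ j, R i j * (∑ k, y k * R k j)) = y := by
      funext i
      simp_rw [Finset.mul_sum]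
      rw [Finset.sum_comm]
      have hterm : ∀ k, ∑ j, R i j * (y k * R k j) = y k * (if i = k then 1 else 0) := by
        intro k
        rw [← bw_orth_entry n R hR i k, Finset.mul_sum]
        exact Finset.sum_congr rfl fun j _ => by ring
      rw [Finset.sum_congr rfl fun k _ => hterm k]
      simp
    rw [hy, sub_self]
  have hker : Submodule.span ℝ (Set.range (bwPhi n d)) ≤ LinearMap.ker F := by
    rw [Submodule.span_le]
    rintro _ ⟨y, rfl⟩
    exact LinearMap.mem_ker.mpr (hFphi y)
  have hFq : F q = 0 := hker (bw_span n d q hq)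
  simp only [hF, LinearMap.sub_apply, LinearMap.comp_apply, AlgHom.toLinearMap_apply] at hFq
  rw [bwB_eq_bwInner n d (hσhom hp) (hσhom hq), bwB_eq_bwInner n d hp hq] at hFq
  linarith
end

section
/- Let n ≥ 1, d ≥ 1, and let c : ℝ → ℝ^{n+1} be a differentiable curve with ‖c(t)‖ = 1 for all t. Then the curve t ↦ ℓ_{c(t)}^d in ℝ[x₀,…,x_n]_(d) is differentiable, its derivative at t equals d · ℓ_{c(t)}^{d-1} · ℓ_{c'(t)}, and its Bombieri–Weyl norm satisfies ‖(d/dt) ℓ_{c(t)}^d‖_BW = √d · ‖c'(t)‖. (This expresses that the pullback of the Bombieri–Weyl metric under the spherical Veronese map scales the round metric of S^n by the factor d on squared lengths.) -/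
open MvPolynomial

/-- The linear form `ℓ_a(x) = a₀x₀ + ⋯ + a_n x_n` associated to `a ∈ ℝ^{n+1}`. -/
noncomputable def linForm (n : ℕ) (a : Fin (n + 1) → ℝ) : MvPolynomial (Fin (n + 1)) ℝ :=
  ∑ i, C (a i) * X i

namespace BWAux

variable {n : ℕ}

noncomputable def w (α : Fin (n + 1) →₀ ℕ) : ℝ := ∏ i, ((α i).factorial : ℝ)

noncomputable def apol (p q : MvPolynomial (Fin (n + 1)) ℝ) : ℝ :=
  ∑ α ∈ p.support, w α * coeff α p * coeff α q

lemma apol_eq_sum_subset {p : MvPolynomial (Fin (n + 1)) ℝ} {s : Finset (Fin (n + 1) →₀ ℕ)}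
    (h : p.support ⊆ s) (q : MvPolynomial (Fin (n + 1)) ℝ) :
    apol p q = ∑ α ∈ s, w α * coeff α p * coeff α q := by
  refine Finset.sum_subset h fun α _ hα => ?_
  rw [notMem_support_iff] at hα
  simp [hα]

lemma apol_add_left (p p' q : MvPolynomial (Fin (n + 1)) ℝ) :
    apol (p + p') q = apol p q + apol p' q := by
  rw [apol_eq_sum_subset (s := p.support ∪ p'.support)
        (le_trans (support_add) le_rfl) q,
      apol_eq_sum_subset (s := p.support ∪ p'.support) Finset.subset_union_left q,
      apol_eq_sum_subset (s := p.support ∪ p'.support) Finset.subset_union_right q,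
      ← Finset.sum_add_distrib]
  refine Finset.sum_congr rfl fun α _ => ?_
  rw [coeff_add]; ring

lemma apol_zero_left (q : MvPolynomial (Fin (n + 1)) ℝ) : apol 0 q = 0 := by
  simp [apol]

lemma apol_sum_left {ι : Type*} (s : Finset ι) (f : ι → MvPolynomial (Fin (n + 1)) ℝ)
    (q : MvPolynomial (Fin (n + 1)) ℝ) :
    apol (∑ i ∈ s, f i) q = ∑ i ∈ s, apol (f i) q := by
  induction s using Finset.cons_induction with
  | empty => simp [apol_zero_left]
  | cons i s hi ih => rw [Finset.sum_cons, Finset.sum_cons, apol_add_left, ih]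

lemma apol_smul_left (r : ℝ) (p q : MvPolynomial (Fin (n + 1)) ℝ) :
    apol (r • p) q = r * apol p q := by
  rw [apol_eq_sum_subset (s := p.support) (support_smul) q, apol, Finset.mul_sum]
  refine Finset.sum_congr rfl fun α _ => ?_
  rw [coeff_smul]; simp; ring

lemma apol_C_mul_left (r : ℝ) (p q : MvPolynomial (Fin (n + 1)) ℝ) :
    apol (C r * p) q = r * apol p q := by
  rw [C_mul', apol_smul_left]

lemma apol_sum_right {ι : Type*} (p : MvPolynomial (Fin (n + 1)) ℝ) (s : Finset ι)
    (f : ι → MvPolynomial (Fin (n + 1)) ℝ) :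
    apol p (∑ i ∈ s, f i) = ∑ i ∈ s, apol p (f i) := by
  simp only [apol, coeff_sum, Finset.mul_sum]
  rw [Finset.sum_comm]

lemma apol_C_mul_right (r : ℝ) (p q : MvPolynomial (Fin (n + 1)) ℝ) :
    apol p (C r * q) = r * apol p q := by
  simp only [apol, coeff_C_mul, Finset.mul_sum]
  refine Finset.sum_congr rfl fun α _ => by ring

lemma apol_one (q : MvPolynomial (Fin (n + 1)) ℝ) : apol 1 q = coeff 0 q := by
  have h1 : (1 : MvPolynomial (Fin (n + 1)) ℝ).support = {0} := by
    rw [show (1 : MvPolynomial (Fin (n + 1)) ℝ) = monomial 0 1 from rfl, support_monomial]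
    simp
  simp [apol, h1, w]

end BWAux

namespace BWAux
variable {n : ℕ}

noncomputable def addSingleEmb (j : Fin (n + 1)) : (Fin (n + 1) →₀ ℕ) ↪ (Fin (n + 1) →₀ ℕ) :=
  ⟨fun β => β + Finsupp.single j 1, fun x y h => by simpa using h⟩

lemma addSingleEmb_apply (j : Fin (n + 1)) (β : Fin (n + 1) →₀ ℕ) :
    addSingleEmb j β = β + Finsupp.single j 1 := rfl

lemma apply_add_single (β : Fin (n + 1) →₀ ℕ) (j i : Fin (n + 1)) :
    (β + Finsupp.single j 1 : Fin (n + 1) →₀ ℕ) i = β i + if j = i then 1 else 0 := by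
  rw [Finsupp.add_apply, Finsupp.single_apply]

lemma w_add_single (β : Fin (n + 1) →₀ ℕ) (j : Fin (n + 1)) :
    w (β + Finsupp.single j 1) = ((β j : ℝ) + 1) * w β := by
  rw [w, w, ← Finset.mul_prod_erase _ _ (Finset.mem_univ j),
      ← Finset.mul_prod_erase _ (fun i => ((β i).factorial : ℝ)) (Finset.mem_univ j)]
  have h1 : (β + Finsupp.single j 1 : Fin (n + 1) →₀ ℕ) j = β j + 1 := by
    rw [apply_add_single, if_pos rfl]
  have h2 : ∀ i ∈ Finset.univ.erase j,
      (((β + Finsupp.single j 1 : Fin (n + 1) →₀ ℕ) i).factorial : ℝ)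
        = ((β i).factorial : ℝ) := by
    intro i hi
    rw [apply_add_single, if_neg (Ne.symm (Finset.mem_erase.1 hi).1), add_zero]
  rw [h1, Finset.prod_congr rfl h2, Nat.factorial_succ]
  push_cast; ring

lemma coeff_pderiv (j : Fin (n + 1)) (β : Fin (n + 1) →₀ ℕ) (q : MvPolynomial (Fin (n + 1)) ℝ) :
    coeff β (pderiv j q) = ((β j : ℝ) + 1) * coeff (β + Finsupp.single j 1) q := by
  induction q using MvPolynomial.induction_on' with
  | add p q hp hq => rw [map_add, coeff_add, coeff_add, hp, hq]; ring
  | monomial s a =>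
    rw [pderiv_monomial, coeff_monomial, coeff_monomial]
    by_cases h : Finsupp.single j 1 ≤ s
    · have hs : s - Finsupp.single j 1 = β ↔ s = β + Finsupp.single j 1 :=
        tsub_eq_iff_eq_add_of_le h
      by_cases h2 : s = β + Finsupp.single j 1
      · rw [if_pos (hs.2 h2), if_pos h2]
        have hsj : s j = β j + 1 := by
          rw [h2, apply_add_single, if_pos rfl]
        rw [hsj]; push_cast; ring
      · rw [if_neg (fun hh => h2 (hs.1 hh)), if_neg h2, mul_zero]
    · have hj : s j = 0 := by
        by_contra hj
        exact h (Finsupp.single_le_iff.2 (Nat.one_le_iff_ne_zero.2 hj))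
      have h2 : s ≠ β + Finsupp.single j 1 := by
        intro hh
        rw [hh, apply_add_single, if_pos rfl] at hj
        simp at hj
      rw [if_neg h2, mul_zero]
      split_ifs <;> simp [hj]

lemma apol_X_mul (j : Fin (n + 1)) (p q : MvPolynomial (Fin (n + 1)) ℝ) :
    apol (X j * p) q = apol p (pderiv j q) := by
  classical
  rw [apol_eq_sum_subset (s := p.support.map (addSingleEmb j)) ?_ q]
  · rw [Finset.sum_map, apol]
    refine Finset.sum_congr rfl fun β hβ => ?_
    rw [addSingleEmb_apply]
    have hc : coeff (β + Finsupp.single j 1) (X j * p) = coeff β p := by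
      rw [show β + Finsupp.single j 1 = Finsupp.single j 1 + β from add_comm _ _]
      exact coeff_X_mul β j p
    rw [hc, coeff_pderiv, w_add_single]
    ring
  · intro α hα
    rw [mem_support_iff, coeff_X_mul'] at hα
    by_cases hjs : j ∈ α.support
    · rw [if_pos hjs] at hα
      refine Finset.mem_map.2 ⟨α - Finsupp.single j 1, mem_support_iff.2 hα, ?_⟩
      rw [addSingleEmb_apply]
      refine tsub_add_cancel_of_le (Finsupp.single_le_iff.2 ?_)
      exact Nat.one_le_iff_ne_zero.2 (Finsupp.mem_support_iff.1 hjs)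
    · rw [if_neg hjs] at hα; exact absurd rfl hα

end BWAux

namespace BWAux
variable {n : ℕ}

noncomputable def Dop (a : Fin (n + 1) → ℝ) (q : MvPolynomial (Fin (n + 1)) ℝ) :
    MvPolynomial (Fin (n + 1)) ℝ :=
  ∑ j, C (a j) * pderiv j q

lemma apol_linForm_mul (a : Fin (n + 1) → ℝ) (p q : MvPolynomial (Fin (n + 1)) ℝ) :
    apol (linForm n a * p) q = apol p (Dop a q) := by
  have h : linForm n a * p = ∑ j, C (a j) * (X j * p) := by
    rw [linForm, Finset.sum_mul]
    exact Finset.sum_congr rfl fun j _ => by ring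
  rw [h, apol_sum_left, Dop, apol_sum_right]
  refine Finset.sum_congr rfl fun j _ => ?_
  rw [apol_C_mul_left, apol_C_mul_right, apol_X_mul]

lemma pderiv_linForm (j : Fin (n + 1)) (u : Fin (n + 1) → ℝ) :
    pderiv j (linForm n u) = C (u j) := by
  classical
  rw [linForm, map_sum]
  rw [Finset.sum_eq_single j (fun i _ hij => by
        rw [pderiv_mul, pderiv_C, pderiv_X_of_ne hij, zero_mul, mul_zero, add_zero])
      (fun h => absurd (Finset.mem_univ j) h)]
  rw [pderiv_mul, pderiv_C, pderiv_X_self, zero_mul, mul_one, zero_add]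

lemma Dop_linForm (a u : Fin (n + 1) → ℝ) :
    Dop a (linForm n u) = C (∑ j, a j * u j) := by
  rw [Dop, map_sum]
  exact Finset.sum_congr rfl fun j _ => by rw [pderiv_linForm, ← C_mul]

lemma Dop_mul (a : Fin (n + 1) → ℝ) (p q : MvPolynomial (Fin (n + 1)) ℝ) :
    Dop a (p * q) = Dop a p * q + p * Dop a q := by
  rw [Dop, Dop, Dop, Finset.sum_mul, Finset.mul_sum, ← Finset.sum_add_distrib]
  refine Finset.sum_congr rfl fun j _ => ?_
  rw [pderiv_mul]
  ring

lemma Dop_pow (a : Fin (n + 1) → ℝ) (hA : ∑ j, a j * a j = 1) :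
    ∀ k : ℕ, Dop a (linForm n a ^ (k + 1)) = C ((k : ℝ) + 1) * linForm n a ^ k := by
  intro k
  induction k with
  | zero => simp [Dop_linForm, hA]
  | succ k ih =>
    rw [pow_succ, Dop_mul, ih, Dop_linForm, hA]
    have hc : ((k + 1 : ℕ) : ℝ) + 1 = ((k : ℝ) + 1) + 1 := by push_cast; ring
    rw [hc]
    simp only [C_add, C_1]
    ring

lemma bwInner_eq_apol (d : ℕ) (p q : MvPolynomial (Fin (n + 1)) ℝ) :
    bwInner n d p q = apol p q / d.factorial := by
  rw [apol_eq_sum_subset (s := p.support ∪ q.support) Finset.subset_union_left q,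
    bwInner, Finset.sum_div]
  refine Finset.sum_congr rfl fun α _ => ?_
  rw [w]; ring

lemma Dop_main (a b : Fin (n + 1) → ℝ) (hA : ∑ j, a j * a j = 1)
    (hAB : ∑ j, a j * b j = 0) (k : ℕ) :
    Dop a (linForm n a ^ (k + 1) * linForm n b)
      = C ((k : ℝ) + 1) * (linForm n a ^ k * linForm n b) := by
  rw [Dop_mul, Dop_pow a hA k, Dop_linForm, hAB, C_0, mul_zero, add_zero, mul_assoc]

lemma apol_G (a b : Fin (n + 1) → ℝ) (hA : ∑ j, a j * a j = 1)
    (hAB : ∑ j, a j * b j = 0) :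
    ∀ k : ℕ, apol (linForm n a ^ k * linForm n b) (linForm n a ^ k * linForm n b)
      = (k.factorial : ℝ) * ∑ j, b j * b j := by
  intro k
  induction k with
  | zero =>
    rw [pow_zero, one_mul]
    have h0 : apol (linForm n b) (linForm n b)
        = apol 1 (Dop b (linForm n b)) := by
      rw [← apol_linForm_mul, mul_one]
    rw [h0, apol_one, Dop_linForm, coeff_zero_C]
    simp
  | succ k ih =>
    have h1 : linForm n a ^ (k + 1) * linForm n b
        = linForm n a * (linForm n a ^ k * linForm n b) := by ring
    rw [h1, apol_linForm_mul, ← h1, Dop_main a b hA hAB k, apol_C_mul_right, ih,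
      Nat.factorial_succ]
    push_cast
    ring

lemma hasDerivAt_coeff_lin (c : ℝ → (Fin (n + 1) → ℝ)) (t : ℝ) (b : Fin (n + 1) → ℝ)
    (hb : ∀ i, HasDerivAt (fun s => c s i) (b i) t) (δ : Fin (n + 1) →₀ ℕ) :
    HasDerivAt (fun s => coeff δ (linForm n (c s))) (coeff δ (linForm n b)) t := by
  have h : HasDerivAt (fun s => ∑ i, c s i * coeff δ (X i))
      (∑ i, b i * coeff δ (X i)) t :=
    HasDerivAt.fun_sum fun i _ => (hb i).mul_const _
  simpa only [linForm, coeff_sum, coeff_C_mul] using h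

lemma smul_step (m : ℕ) (la lb : MvPolynomial (Fin (n + 1)) ℝ) :
    ((m : ℝ) • (la ^ (m - 1) * lb)) * la + la ^ m * lb
      = ((m + 1 : ℕ) : ℝ) • (la ^ m * lb) := by
  cases m with
  | zero => simp
  | succ k =>
    have h : (k + 1 : ℕ) - 1 = k := rfl
    rw [h, smul_eq_C_mul, smul_eq_C_mul]
    push_cast
    simp only [C_add, C_1]
    ring

lemma hasDerivAt_coeff_pow (c : ℝ → (Fin (n + 1) → ℝ)) (t : ℝ) (b : Fin (n + 1) → ℝ)
    (hb : ∀ i, HasDerivAt (fun s => c s i) (b i) t) :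
    ∀ (m : ℕ) (γ : Fin (n + 1) →₀ ℕ),
      HasDerivAt (fun s => coeff γ (linForm n (c s) ^ m))
        (coeff γ ((m : ℝ) • (linForm n (c t) ^ (m - 1) * linForm n b))) t := by
  intro m
  induction m with
  | zero =>
    intro γ
    simp only [pow_zero, Nat.cast_zero, zero_smul, coeff_zero]
    exact hasDerivAt_const t _
  | succ m ih =>
    intro γ
    have key : HasDerivAt (fun s => ∑ x ∈ Finset.HasAntidiagonal.antidiagonal γ,
          coeff x.1 (linForm n (c s) ^ m) * coeff x.2 (linForm n (c s)))
        (∑ x ∈ Finset.HasAntidiagonal.antidiagonal γ,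
          (coeff x.1 ((m : ℝ) • (linForm n (c t) ^ (m - 1) * linForm n b))
              * coeff x.2 (linForm n (c t))
            + coeff x.1 (linForm n (c t) ^ m) * coeff x.2 (linForm n b))) t :=
      HasDerivAt.fun_sum fun x _ => (ih x.1).mul (hasDerivAt_coeff_lin c t b hb x.2)
    have hval : (∑ x ∈ Finset.HasAntidiagonal.antidiagonal γ,
          (coeff x.1 ((m : ℝ) • (linForm n (c t) ^ (m - 1) * linForm n b))
              * coeff x.2 (linForm n (c t))
            + coeff x.1 (linForm n (c t) ^ m) * coeff x.2 (linForm n b)))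
        = coeff γ (((m + 1 : ℕ) : ℝ) • (linForm n (c t) ^ m * linForm n b)) := by
      rw [Finset.sum_add_distrib, ← coeff_mul, ← coeff_mul, ← coeff_add, smul_step]
    have hfun : (fun s => coeff γ (linForm n (c s) ^ (m + 1)))
        = fun s => ∑ x ∈ Finset.HasAntidiagonal.antidiagonal γ,
            coeff x.1 (linForm n (c s) ^ m) * coeff x.2 (linForm n (c s)) := by
      funext s
      rw [pow_succ, coeff_mul]
    rw [hfun, show (m + 1 : ℕ) - 1 = m from rfl]
    exact hval ▸ key

lemma apol_smul_right (r : ℝ) (p q : MvPolynomial (Fin (n + 1)) ℝ) :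
    apol p (r • q) = r * apol p q := by
  simp only [apol, coeff_smul, smul_eq_mul, Finset.mul_sum]
  exact Finset.sum_congr rfl fun α _ => by ring

end BWAux

open BWAux

/-- Let `n ≥ 1`, `d ≥ 1`, and let `c : ℝ → ℝ^{n+1}` be a differentiable curve
with `‖c(t)‖ = 1` for all `t`.  Then the curve `t ↦ ℓ_{c(t)}^d` is differentiable
(coefficientwise) with derivative `d · ℓ_{c(t)}^{d-1} · ℓ_{c'(t)}`, and the Bombieri–Weyl
norm of this derivative equals `√d · ‖c'(t)‖`. -/
theorem veronese_curve_derivative (n d : ℕ) (hn : 1 ≤ n) (hd : 1 ≤ d)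
    (c : ℝ → EuclideanSpace ℝ (Fin (n + 1))) (hc : Differentiable ℝ c)
    (hsph : ∀ t, ‖c t‖ = 1) (t : ℝ) :
    (∀ γ : Fin (n + 1) →₀ ℕ,
      HasDerivAt (fun s => coeff γ (linForm n (c s) ^ d))
        (coeff γ ((d : ℝ) • (linForm n (c t) ^ (d - 1) * linForm n (WithLp.ofLp (deriv c t))))) t) ∧
    Real.sqrt (bwInner n d
        ((d : ℝ) • (linForm n (c t) ^ (d - 1) * linForm n (WithLp.ofLp (deriv c t))))
        ((d : ℝ) • (linForm n (c t) ^ (d - 1) * linForm n (WithLp.ofLp (deriv c t)))))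
      = Real.sqrt d * ‖deriv c t‖ := by
  -- componentwise derivatives of the curve
  have hb : ∀ i, HasDerivAt (fun s => c s i) (deriv c t i) t := by
    intro i
    have h1 : HasDerivAt c (deriv c t) t := (hc t).hasDerivAt
    have h2 := (EuclideanSpace.proj (𝕜 := ℝ) i).hasFDerivAt.comp_hasDerivAt t h1
    exact h2
  -- norms squared as sums
  have hnorm : ∀ x : EuclideanSpace ℝ (Fin (n + 1)), ∑ j, x j * x j = ‖x‖ ^ 2 := by
    intro x
    rw [EuclideanSpace.norm_eq, Real.sq_sqrt (by positivity)]
    exact Finset.sum_congr rfl fun j _ => by rw [Real.norm_eq_abs, sq_abs, sq]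
  have hsq : ∀ s, ∑ j, c s j * c s j = 1 := by
    intro s; rw [hnorm, hsph s]; norm_num
  have hA : ∑ j, c t j * c t j = 1 := hsq t
  -- orthogonality of c t and deriv c t
  have hder : HasDerivAt (fun s => ∑ j, c s j * c s j)
      (∑ j, (deriv c t j * c t j + c t j * deriv c t j)) t :=
    HasDerivAt.fun_sum fun j _ => (hb j).mul (hb j)
  have h0 : HasDerivAt (fun s => ∑ j, c s j * c s j) 0 t := by
    have hconst : (fun s : ℝ => ∑ j, c s j * c s j) = fun _ => (1 : ℝ) :=
      funext fun s => hsq s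
    rw [hconst]; exact hasDerivAt_const t 1
  have heq := hder.unique h0
  have h2 : (2 : ℝ) * ∑ j, c t j * deriv c t j = 0 := by
    rw [Finset.mul_sum, ← heq]
    exact Finset.sum_congr rfl fun j _ => by ring
  have hAB : ∑ j, c t j * deriv c t j = 0 := by linarith
  set bv : EuclideanSpace ℝ (Fin (n + 1)) := deriv c t with hbv
  have hbd : HasDerivAt c bv t := by rw [hbv]; exact (hc t).hasDerivAt
  have hPi : HasDerivAt
      (fun s => (PiLp.continuousLinearEquiv 2 ℝ (fun _ : Fin (n + 1) => ℝ)) (c s))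
      ((PiLp.continuousLinearEquiv 2 ℝ (fun _ : Fin (n + 1) => ℝ)) bv) t :=
    (PiLp.continuousLinearEquiv 2 ℝ
      (fun _ : Fin (n + 1) => ℝ)).hasFDerivAt.comp_hasDerivAt t hbd
  constructor
  · intro γ
    exact hasDerivAt_coeff_pow (fun s => WithLp.ofLp (c s)) t (WithLp.ofLp bv) hb d γ
  · -- the norm computation
    obtain ⟨e, rfl⟩ : ∃ e, d = e + 1 := ⟨d - 1, (Nat.succ_pred_eq_of_pos hd).symm⟩
    have hpow : (e + 1) - 1 = e := rfl
    rw [hpow]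
    set S : ℝ := ∑ j, bv j * bv j with hS
    have hG := apol_G (c t) bv hA hAB e
    have hbw : bwInner n (e + 1)
        (((e + 1 : ℕ) : ℝ) • (linForm n (c t) ^ e * linForm n bv))
        (((e + 1 : ℕ) : ℝ) • (linForm n (c t) ^ e * linForm n bv))
        = ((e + 1 : ℕ) : ℝ) * S := by
      rw [bwInner_eq_apol, apol_smul_left, apol_smul_right, hG]
      have hfac : ((e + 1).factorial : ℝ) = ((e + 1 : ℕ) : ℝ) * (e.factorial : ℝ) := by
        rw [Nat.factorial_succ]; push_cast; ring
      rw [hfac]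
      have hfe : (e.factorial : ℝ) ≠ 0 := Nat.cast_ne_zero.2 e.factorial_ne_zero
      have hne : ((e + 1 : ℕ) : ℝ) ≠ 0 := Nat.cast_ne_zero.2 (Nat.succ_ne_zero e)
      field_simp
      simp only [hS, sq]
    rw [hbw]
    have hSnorm : Real.sqrt S = ‖bv‖ := by
      rw [hS, hnorm, Real.sqrt_sq (norm_nonneg _)]
    rw [Real.sqrt_mul (by positivity) S, hSnorm]
end
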